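/- Let (W, S) be a Coxeter system with Coxeter diagram Λ (the graph on vertex set S with an edge between s and t whenever m(s,t) ≥ 3). Fix s ∈ S and set I = S \ {s}. Let w ∈ W \ W_I be the minimal length element of its coset W_I w. Then s ∈ Supp(w), and Supp(w) is irreducible: it cannot be partitioned into two nonempty subsets J_1 and J_2 such that every element of J_1 commutes with every element of J_2. Equivalently, Supp(w) spans a connected subgraph of Λ. -/

import Mathlib

open Classical in
private lemma wordProd_split {B : Type*} {W : Type*} [Group W] {M : CoxeterMatrix B}
    (cs : CoxeterSystem M W) (J₁ J₂ : Set B)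
    (hcomm : ∀ b₁ ∈ J₁, ∀ b₂ ∈ J₂, Commute (cs.simple b₁) (cs.simple b₂)) :
    ∀ ω : List B, (∀ b ∈ ω, b ∈ J₁ ∪ J₂) →
      cs.wordProd ω = cs.wordProd (ω.filter (· ∈ J₁)) *
        cs.wordProd (ω.filter (fun b => ¬ (b ∈ J₁))) := by
  intro ω
  induction ω with
  | nil => simp [CoxeterSystem.wordProd]
  | cons a t ih =>
    intro hsub
    have ht : ∀ b ∈ t, b ∈ J₁ ∪ J₂ := fun b hb => hsub b (List.mem_cons_of_mem a hb)
    by_cases ha : a ∈ J₁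
    · rw [List.filter_cons_of_pos (by simpa using ha),
        List.filter_cons_of_neg (by simpa using ha)]
      rw [cs.wordProd_cons, cs.wordProd_cons, ih ht, mul_assoc]
    · rw [List.filter_cons_of_neg (by simpa using ha),
        List.filter_cons_of_pos (by simpa using ha)]
      have haJ₂ : a ∈ J₂ := (hsub a (List.mem_cons_self (a := a) (l := t))).resolve_left ha
      have hc : Commute (cs.simple a) (cs.wordProd (t.filter (· ∈ J₁))) := by
        rw [CoxeterSystem.wordProd]
        apply Commute.list_prod_right
        intro x hx
        rcases List.mem_map.mp hx with ⟨b, hb, rfl⟩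
        have hbJ₁ : b ∈ J₁ := by simpa using (List.mem_filter.mp hb).2
        exact (hcomm b hbJ₁ a haJ₂).symm
      rw [cs.wordProd_cons, cs.wordProd_cons, ih ht, ← mul_assoc, hc.eq, mul_assoc]

theorem coxeter_escaping_coset_rep_support_irreducible
    {B : Type*} {W : Type*} [Group W] {M : CoxeterMatrix B}
    (cs : CoxeterSystem M W) (s : B) (w : W)
    (hw : w ∉ Subgroup.closure (cs.simple '' {b : B | b ≠ s}))
    (hmin : ∀ v ∈ Subgroup.closure (cs.simple '' {b : B | b ≠ s}),
      cs.length w ≤ cs.length (v * w)) :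
    s ∈ {b : B | ∃ ω : List B, cs.IsReduced ω ∧ cs.wordProd ω = w ∧ b ∈ ω} ∧
    ¬ ∃ J₁ J₂ : Set B, J₁.Nonempty ∧ J₂.Nonempty ∧ Disjoint J₁ J₂ ∧
        J₁ ∪ J₂ = {b : B | ∃ ω : List B, cs.IsReduced ω ∧ cs.wordProd ω = w ∧ b ∈ ω} ∧
        ∀ b₁ ∈ J₁, ∀ b₂ ∈ J₂, Commute (cs.simple b₁) (cs.simple b₂) := by
  classical
  -- membership in the parabolic subgroup from a word avoiding s
  have hmem : ∀ ω : List B, (∀ b ∈ ω, b ≠ s) →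
      cs.wordProd ω ∈ Subgroup.closure (cs.simple '' {b : B | b ≠ s}) := by
    intro ω hω
    rw [CoxeterSystem.wordProd]
    apply Subgroup.list_prod_mem
    intro x hx
    rcases List.mem_map.mp hx with ⟨b, hb, rfl⟩
    exact Subgroup.subset_closure ⟨b, hω b hb, rfl⟩
  -- claim 1: s is in the support
  have hsupp : s ∈ {b : B | ∃ ω : List B, cs.IsReduced ω ∧ cs.wordProd ω = w ∧ b ∈ ω} := by
    obtain ⟨ω, hred, hprod⟩ := cs.exists_reduced_word' w
    by_cases hs : s ∈ ω
    · exact ⟨ω, hred, hprod.symm, hs⟩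
    · exact absurd (hmem ω (fun b hb hbs => hs (hbs ▸ hb))) (hprod ▸ hw)
  refine ⟨hsupp, ?_⟩
  rintro ⟨J₁, J₂, ⟨b₁, hb₁⟩, ⟨b₂, hb₂⟩, hdisj, hunion, hcomm⟩
  -- key argument: if J is a commuting part not containing s, no reduced word of w meets J
  have key : ∀ (Ja Jb : Set B), Disjoint Ja Jb → s ∉ Ja → Ja ∪ Jb = J₁ ∪ J₂ →
      (∀ a ∈ Ja, ∀ b ∈ Jb, Commute (cs.simple a) (cs.simple b)) →
      ∀ b ∈ Ja, b ∉ {b : B | ∃ ω : List B, cs.IsReduced ω ∧ cs.wordProd ω = w ∧ b ∈ ω} := by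
    intro Ja Jb hd hsJa huni hc b hbJa ⟨ω, hred, hprod, hbω⟩
    have hsub : ∀ x ∈ ω, x ∈ Ja ∪ Jb := by
      intro x hx
      rw [huni, hunion]
      exact ⟨ω, hred, hprod, hx⟩
    have hsplit := wordProd_split cs Ja Jb hc ω hsub
    set l₁ := ω.filter (· ∈ Ja) with hl₁
    set l₂ := ω.filter (fun b => ¬ (b ∈ Ja)) with hl₂
    have hw₁ : cs.wordProd l₁ ∈ Subgroup.closure (cs.simple '' {b : B | b ≠ s}) := by
      apply hmem
      intro x hx hxs
      have : x ∈ Ja := by simpa using (List.mem_filter.mp hx).2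
      exact hsJa (hxs ▸ this)
    have hle := hmin _ (Subgroup.inv_mem _ hw₁)
    have heq : (cs.wordProd l₁)⁻¹ * w = cs.wordProd l₂ := by
      rw [← hprod, hsplit]; group
    rw [heq] at hle
    have hlen2 : cs.length (cs.wordProd l₂) ≤ l₂.length := cs.length_wordProd_le l₂
    have hsum : l₁.length + l₂.length = ω.length := by
      simp only [hl₁, hl₂]
      rw [← List.countP_eq_length_filter, ← List.countP_eq_length_filter]
      have := ω.length_eq_countP_add_countP (fun b => decide (b ∈ Ja))
      simp only [this]
      congr 1
      apply List.countP_congr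
      intro x _
      simp
    have hpos : 0 < l₁.length := List.length_pos_of_mem
      (List.mem_filter.mpr ⟨hbω, by simpa using hbJa⟩)
    have : cs.length w ≤ ω.length - l₁.length := le_trans hle (hlen2.trans (by omega))
    have hred' : cs.length w = ω.length := by rw [← hprod]; exact hred
    omega
  -- s lies in J₁ or J₂; apply `key` to the other part
  have hsJ : s ∈ J₁ ∪ J₂ := hunion ▸ hsupp
  rcases hsJ with hs₁ | hs₂
  · exact key J₂ J₁ hdisj.symm (fun h => Set.disjoint_left.mp hdisj hs₁ h)
      (Set.union_comm J₂ J₁) (fun a ha b hb => (hcomm b hb a ha).symm) b₂ hb₂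
      (hunion ▸ Set.mem_union_right J₁ hb₂)
  · exact key J₁ J₂ hdisj (fun h => Set.disjoint_left.mp hdisj h hs₂)
      rfl hcomm b₁ hb₁ (hunion ▸ Set.mem_union_left J₂ hb₁)
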